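/- Let α(v,s,t) = v²/θ(s,t) on ℝ × (0,∞)², where θ is the logarithmic mean. For two distinct points Z₁ = (v₁,s₁,t₁) and Z₂ = (v₂,s₂,t₂) in ℝ × (0,∞)², the function α is affine on the segment [Z₁,Z₂] if and only if either v₁ = v₂ = 0, or there exists κ > 0 with κ ≠ 1 such that Z₂ = κ·Z₁. -/

import Mathlib

/-- The logarithmic mean. -/
noncomputable def logMean (u v : ℝ) : ℝ :=
  if u = v then v else (u - v) / (Real.log u - Real.log v)

/-- The action density α(v,s,t) = v²/θ(s,t) on ℝ × (0,∞)². -/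
noncomputable def alphaR (v s t : ℝ) : ℝ := v ^ 2 / logMean s t

lemma polyExt (p : Polynomial ℝ) (h : ∀ x ∈ Set.Ioo (0:ℝ) 1, p.eval x = 0) (y : ℝ) :
    p.eval y = 0 := by
  have hp : p = 0 := by
    apply Polynomial.eq_zero_of_infinite_isRoot
    exact (Set.Ioo_infinite (by norm_num : (0:ℝ) < 1)).mono (fun x hx => h x hx)
  simp [hp]

lemma logMean_pos {u w : ℝ} (hu : 0 < u) (hw : 0 < w) : 0 < logMean u w := by
  rcases lt_trichotomy u w with h | h | h
  · rw [logMean, if_neg h.ne]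
    exact div_pos_of_neg_of_neg (by linarith) (by linarith [Real.log_lt_log hu h])
  · rw [logMean, if_pos h]; exact hw
  · rw [logMean, if_neg h.ne']
    exact div_pos (by linarith) (by linarith [Real.log_lt_log hw h])

lemma logMean_mul_log_sub {u w : ℝ} (hu : 0 < u) (hw : 0 < w) :
    logMean u w * (Real.log u - Real.log w) = u - w := by
  rcases eq_or_ne u w with h | h
  · subst h; simp
  · rw [logMean, if_neg h]
    have hlog : Real.log u - Real.log w ≠ 0 := by
      rcases h.lt_or_gt with h' | h'
      · exact sub_ne_zero.2 (Real.log_lt_log hu h').ne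
      · exact sub_ne_zero.2 (Real.log_lt_log hw h').ne'
    field_simp

lemma logMean_smul {c u w : ℝ} (hc : 0 < c) (hu : 0 < u) (hw : 0 < w) :
    logMean (c * u) (c * w) = c * logMean u w := by
  rcases eq_or_ne u w with h | h
  · subst h; rw [logMean, if_pos rfl, logMean, if_pos rfl]
  · have h' : c * u ≠ c * w := by
      intro hcontra; exact h (mul_left_cancel₀ hc.ne' hcontra)
    rw [logMean, if_neg h', logMean, if_neg h,
      Real.log_mul hc.ne' hu.ne', Real.log_mul hc.ne' hw.ne']
    have hd : Real.log c + Real.log u - (Real.log c + Real.log w)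
        = Real.log u - Real.log w := by ring
    rw [hd, ← mul_sub, mul_div_assoc]

lemma convex_pos {x y τ : ℝ} (hx : 0 < x) (hy : 0 < y) (h0 : 0 ≤ τ) (h1 : τ ≤ 1) :
    0 < (1 - τ) * x + τ * y := by
  rcases eq_or_lt_of_le h0 with h | h
  · simp [← h]; linarith
  · have := mul_pos h hy
    nlinarith [mul_nonneg (by linarith : (0:ℝ) ≤ 1 - τ) hx.le]

/-- Characterization of the affine segments of α on ℝ × (0,∞)²: for distinct points
    Z₁ = (v₁,s₁,t₁), Z₂ = (v₂,s₂,t₂), α is affine on [Z₁,Z₂] iff v₁ = v₂ = 0 or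
    Z₂ = κ·Z₁ for some κ > 0, κ ≠ 1. -/
theorem alphaR_affine_iff (v₁ s₁ t₁ v₂ s₂ t₂ : ℝ)
    (hs₁ : 0 < s₁) (ht₁ : 0 < t₁) (hs₂ : 0 < s₂) (ht₂ : 0 < t₂)
    (hne : (v₁, s₁, t₁) ≠ (v₂, s₂, t₂)) :
    (∃ A B : ℝ, ∀ τ ∈ Set.Icc (0:ℝ) 1,
        alphaR ((1 - τ) * v₁ + τ * v₂) ((1 - τ) * s₁ + τ * s₂) ((1 - τ) * t₁ + τ * t₂)
          = A * τ + B)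
      ↔ (v₁ = 0 ∧ v₂ = 0) ∨
        ∃ κ : ℝ, 0 < κ ∧ κ ≠ 1 ∧ (v₂, s₂, t₂) = (κ * v₁, κ * s₁, κ * t₁) := by
  constructor
  · intro h
    obtain ⟨A, B, hAB⟩ := h
    set a := s₂ - s₁ with ha
    set b := t₂ - t₁ with hb
    set m := v₂ - v₁ with hm
    -- positivity along the segment
    have hsp : ∀ τ ∈ Set.Icc (0:ℝ) 1, 0 < s₁ + a * τ := by
      intro τ hτ
      have := convex_pos hs₁ hs₂ hτ.1 hτ.2
      rw [ha]; linarith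
    have htp : ∀ τ ∈ Set.Icc (0:ℝ) 1, 0 < t₁ + b * τ := by
      intro τ hτ
      have := convex_pos ht₁ ht₂ hτ.1 hτ.2
      rw [hb]; linarith
    -- basic algebraic form of the hypothesis
    have hq : ∀ τ ∈ Set.Icc (0:ℝ) 1,
        (v₁ + m * τ) ^ 2 = (A * τ + B) * logMean (s₁ + a * τ) (t₁ + b * τ) := by
      intro τ hτ
      have h := hAB τ hτ
      have e1 : (1 - τ) * s₁ + τ * s₂ = s₁ + a * τ := by rw [ha]; ring
      have e2 : (1 - τ) * t₁ + τ * t₂ = t₁ + b * τ := by rw [hb]; ring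
      have e3 : (1 - τ) * v₁ + τ * v₂ = v₁ + m * τ := by rw [hm]; ring
      rw [alphaR, e1, e2, e3] at h
      have hθ := logMean_pos (hsp τ hτ) (htp τ hτ)
      rw [div_eq_iff hθ.ne'] at h
      exact h
    -- the transcendental identity F ≡ 0 on [0,1]
    have hF0 : ∀ τ ∈ Set.Icc (0:ℝ) 1,
        (v₁ + m * τ) ^ 2 * (Real.log (s₁ + a * τ) - Real.log (t₁ + b * τ))
          - (A * τ + B) * ((s₁ + a * τ) - (t₁ + b * τ)) = 0 := by
      intro τ hτ
      have h := hq τ hτ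
      have hlm := logMean_mul_log_sub (hsp τ hτ) (htp τ hτ)
      linear_combination (Real.log (s₁ + a * τ) - Real.log (t₁ + b * τ)) * h
        + (A * τ + B) * hlm
    -- the derivative identity on (0,1), with denominators cleared
    have deriv0 : ∀ τ ∈ Set.Ioo (0:ℝ) 1,
        2 * m * (v₁ + m * τ) * (Real.log (s₁ + a * τ) - Real.log (t₁ + b * τ))
              * ((s₁ + a * τ) * (t₁ + b * τ))
          + (v₁ + m * τ) ^ 2 * (a * (t₁ + b * τ) - b * (s₁ + a * τ))
          - (A * ((s₁ + a * τ) - (t₁ + b * τ)) + (A * τ + B) * (a - b))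
              * ((s₁ + a * τ) * (t₁ + b * τ)) = 0 := by
      intro τ hτ
      have hτ' : τ ∈ Set.Icc (0:ℝ) 1 := ⟨hτ.1.le, hτ.2.le⟩
      have hsτ := hsp τ hτ'
      have htτ := htp τ hτ'
      have hds : HasDerivAt (fun x => s₁ + a * x) a τ := by
        simpa using ((hasDerivAt_id τ).const_mul a).const_add s₁
      have hdt : HasDerivAt (fun x => t₁ + b * x) b τ := by
        simpa using ((hasDerivAt_id τ).const_mul b).const_add t₁
      have hlogs : HasDerivAt (fun x => Real.log (s₁ + a * x)) (a / (s₁ + a * τ)) τ := by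
        have h := (Real.hasDerivAt_log hsτ.ne').comp τ hds
        simpa [Function.comp_def, div_eq_inv_mul] using h
      have hlogt : HasDerivAt (fun x => Real.log (t₁ + b * x)) (b / (t₁ + b * τ)) τ := by
        have h := (Real.hasDerivAt_log htτ.ne').comp τ hdt
        simpa [Function.comp_def, div_eq_inv_mul] using h
      have hdq : HasDerivAt (fun x => (v₁ + m * x) ^ 2) (2 * m * (v₁ + m * τ)) τ := by
        have h := (((hasDerivAt_id τ).const_mul m).const_add v₁).pow 2
        refine h.congr_deriv ?_
        simp only [id_eq]
        push_cast
        ring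
      have hdL : HasDerivAt (fun x => A * x + B) A τ := by
        simpa using (((hasDerivAt_id τ).const_mul A).add_const B)
      have hdd : HasDerivAt (fun x => (s₁ + a * x) - (t₁ + b * x)) (a - b) τ := hds.sub hdt
      have hFd : HasDerivAt
          (fun x => (v₁ + m * x) ^ 2 * (Real.log (s₁ + a * x) - Real.log (t₁ + b * x))
            - (A * x + B) * ((s₁ + a * x) - (t₁ + b * x)))
          (2 * m * (v₁ + m * τ) * (Real.log (s₁ + a * τ) - Real.log (t₁ + b * τ))
            + (v₁ + m * τ) ^ 2 * (a / (s₁ + a * τ) - b / (t₁ + b * τ))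
            - (A * ((s₁ + a * τ) - (t₁ + b * τ)) + (A * τ + B) * (a - b))) τ := by
        have h := (hdq.mul (hlogs.sub hlogt)).sub (hdL.mul hdd)
        refine h.congr_deriv ?_
        simp only [Pi.sub_apply]
        all_goals ring
      have hev : (fun x => (v₁ + m * x) ^ 2 * (Real.log (s₁ + a * x) - Real.log (t₁ + b * x))
            - (A * x + B) * ((s₁ + a * x) - (t₁ + b * x))) =ᶠ[nhds τ] fun _ => (0:ℝ) := by
        filter_upwards [Ioo_mem_nhds hτ.1 hτ.2] with x hx using hF0 x ⟨hx.1.le, hx.2.le⟩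
      have h0 : HasDerivAt (fun _ : ℝ => (0:ℝ))
          (2 * m * (v₁ + m * τ) * (Real.log (s₁ + a * τ) - Real.log (t₁ + b * τ))
            + (v₁ + m * τ) ^ 2 * (a / (s₁ + a * τ) - b / (t₁ + b * τ))
            - (A * ((s₁ + a * τ) - (t₁ + b * τ)) + (A * τ + B) * (a - b))) τ :=
        hFd.congr_of_eventuallyEq hev.symm
      have hD : 2 * m * (v₁ + m * τ) * (Real.log (s₁ + a * τ) - Real.log (t₁ + b * τ))
            + (v₁ + m * τ) ^ 2 * (a / (s₁ + a * τ) - b / (t₁ + b * τ))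
            - (A * ((s₁ + a * τ) - (t₁ + b * τ)) + (A * τ + B) * (a - b)) = 0 :=
        h0.unique (hasDerivAt_const τ 0)
      have hSTne : (s₁ + a * τ) * (t₁ + b * τ) ≠ 0 := (mul_pos hsτ htτ).ne'
      have e : (v₁ + m * τ) ^ 2 * (a / (s₁ + a * τ) - b / (t₁ + b * τ))
            * ((s₁ + a * τ) * (t₁ + b * τ))
          = (v₁ + m * τ) ^ 2 * (a * (t₁ + b * τ) - b * (s₁ + a * τ)) := by
        rw [div_sub_div _ _ hsτ.ne' htτ.ne', mul_assoc, div_mul_cancel₀ _ hSTne]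
        ring
      linear_combination ((s₁ + a * τ) * (t₁ + b * τ)) * hD - e
    -- the polynomial identity (pointwise on (0,1))
    have P1 : ∀ τ ∈ Set.Ioo (0:ℝ) 1,
        (a * t₁ - b * s₁) * (v₁ + m * τ) ^ 4
          = (s₁ + a * τ) * (t₁ + b * τ)
            * ((v₁ + m * τ) ^ 2 * (A * ((s₁ + a * τ) - (t₁ + b * τ)) + (A * τ + B) * (a - b))
              - 2 * m * (v₁ + m * τ) * ((A * τ + B) * ((s₁ + a * τ) - (t₁ + b * τ)))) := by
      intro τ hτ
      have hd := deriv0 τ hτ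
      have hqg := hF0 τ ⟨hτ.1.le, hτ.2.le⟩
      linear_combination ((v₁ + m * τ) ^ 2) * hd
        - (2 * m * (v₁ + m * τ) * ((s₁ + a * τ) * (t₁ + b * τ))) * hqg
    -- extend the polynomial identity to all of ℝ
    have P1' : ∀ y : ℝ,
        (a * t₁ - b * s₁) * (v₁ + m * y) ^ 4
          = (s₁ + a * y) * (t₁ + b * y)
            * ((v₁ + m * y) ^ 2 * (A * ((s₁ + a * y) - (t₁ + b * y)) + (A * y + B) * (a - b))
              - 2 * m * (v₁ + m * y) * ((A * y + B) * ((s₁ + a * y) - (t₁ + b * y)))) := by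
      intro y
      have h := polyExt (Polynomial.C (a * t₁ - b * s₁)
            * (Polynomial.C v₁ + Polynomial.C m * Polynomial.X) ^ 4
          - (Polynomial.C s₁ + Polynomial.C a * Polynomial.X)
            * (Polynomial.C t₁ + Polynomial.C b * Polynomial.X)
            * ((Polynomial.C v₁ + Polynomial.C m * Polynomial.X) ^ 2
                * (Polynomial.C A * ((Polynomial.C s₁ + Polynomial.C a * Polynomial.X)
                    - (Polynomial.C t₁ + Polynomial.C b * Polynomial.X))
                  + (Polynomial.C A * Polynomial.X + Polynomial.C B)
                    * (Polynomial.C a - Polynomial.C b))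
              - Polynomial.C 2 * Polynomial.C m
                * (Polynomial.C v₁ + Polynomial.C m * Polynomial.X)
                * ((Polynomial.C A * Polynomial.X + Polynomial.C B)
                  * ((Polynomial.C s₁ + Polynomial.C a * Polynomial.X)
                    - (Polynomial.C t₁ + Polynomial.C b * Polynomial.X)))))
        (fun x hx => by
          simp only [Polynomial.eval_add, Polynomial.eval_mul, Polynomial.eval_sub,
            Polynomial.eval_pow, Polynomial.eval_C, Polynomial.eval_X]
          linear_combination P1 x hx) y
      simp only [Polynomial.eval_add, Polynomial.eval_mul, Polynomial.eval_sub,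
        Polynomial.eval_pow, Polynomial.eval_C, Polynomial.eval_X] at h
      linear_combination h
    by_cases hΔ : a * t₁ - b * s₁ = 0
    · -- proportional case : right disjunct
      have hκpos : 0 < s₂ / s₁ := div_pos hs₂ hs₁
      set κ := s₂ / s₁ with hκdef
      have hs₂' : s₂ = κ * s₁ := by rw [hκdef]; field_simp
      have ht₂' : t₂ = κ * t₁ := by
        rw [hκdef, div_mul_eq_mul_div, eq_div_iff hs₁.ne']
        have hΔ' := hΔ
        rw [ha, hb] at hΔ'
        linear_combination -hΔ'
      have hq2 : ∀ τ ∈ Set.Icc (0:ℝ) 1,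
          (v₁ + m * τ) ^ 2 = (A * τ + B) * ((1 + (κ - 1) * τ) * logMean s₁ t₁) := by
        intro τ hτ
        have h := hq τ hτ
        have hℓ : 0 < 1 + (κ - 1) * τ := by
          have := convex_pos one_pos hκpos hτ.1 hτ.2
          linarith
        have hS : s₁ + a * τ = (1 + (κ - 1) * τ) * s₁ := by rw [ha, hs₂']; ring
        have hT : t₁ + b * τ = (1 + (κ - 1) * τ) * t₁ := by rw [hb, ht₂']; ring
        rw [hS, hT, logMean_smul hℓ hs₁ ht₁] at h
        exact h
      have key : ∀ y : ℝ,
          (v₁ + m * y) ^ 2 = (A * y + B) * ((1 + (κ - 1) * y) * logMean s₁ t₁) := by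
        intro y
        have h := polyExt ((Polynomial.C v₁ + Polynomial.C m * Polynomial.X) ^ 2
            - (Polynomial.C A * Polynomial.X + Polynomial.C B)
              * ((Polynomial.C 1 + (Polynomial.C κ - Polynomial.C 1) * Polynomial.X)
                * Polynomial.C (logMean s₁ t₁)))
          (fun x hx => by
            simp only [Polynomial.eval_add, Polynomial.eval_mul, Polynomial.eval_sub,
              Polynomial.eval_pow, Polynomial.eval_C, Polynomial.eval_X, Polynomial.eval_one]
            linear_combination hq2 x ⟨hx.1.le, hx.2.le⟩) y
        simp only [Polynomial.eval_add, Polynomial.eval_mul, Polynomial.eval_sub,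
          Polynomial.eval_pow, Polynomial.eval_C, Polynomial.eval_X, Polynomial.eval_one] at h
        linear_combination h
      have hκ1 : κ ≠ 1 := by
        intro h1
        have k0 := key 0
        have k1 := key 1
        have k2 := key 2
        rw [h1] at k0 k1 k2
        have hm2 : m ^ 2 = 0 := by linear_combination (k2 - 2 * k1 + k0) / 2
        have hm0 : m = 0 := by
          exact pow_eq_zero_iff two_ne_zero |>.mp hm2
        apply hne
        have hv : v₂ = v₁ := by rw [hm] at hm0; linarith
        rw [hv, hs₂', ht₂', h1, one_mul, one_mul]
      have hκ1' : (1:ℝ) - κ ≠ 0 := sub_ne_zero.mpr (Ne.symm hκ1)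
      have hz := key (1 / (1 - κ))
      have hℓ0 : 1 + (κ - 1) * (1 / (1 - κ)) = 0 := by field_simp; ring
      rw [hℓ0] at hz
      have hp0 : v₁ + m * (1 / (1 - κ)) = 0 := by
        have h2 : (v₁ + m * (1 / (1 - κ))) ^ 2 = 0 := by
          rw [hz]; ring
        exact pow_eq_zero_iff two_ne_zero |>.mp h2
      have hmval : m = v₁ * (κ - 1) := by
        field_simp at hp0
        linarith
      have hv₂ : v₂ = κ * v₁ := by
        rw [hm] at hmval
        linear_combination hmval
      exact Or.inr ⟨κ, hκpos, hκ1, by rw [hv₂, hs₂', ht₂']⟩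
    · -- non-proportional case : v₁ = v₂ = 0
      left
      by_cases ha0 : a = 0
      · -- s is constant, t is not
        have hb0 : b ≠ 0 := by
          intro h
          apply hΔ
          rw [ha0, h]
          ring
        set u := -t₁ / b with hudef
        have hu : b * u = -t₁ := by rw [hudef]; field_simp
        have hTu : t₁ + b * u = 0 := by linear_combination hu
        have hroot : v₁ + m * u = 0 := by
          have h := P1' u
          rw [hTu, mul_zero, zero_mul] at h
          have h4 : (v₁ + m * u) ^ 4 = 0 := by
            rcases mul_eq_zero.mp h with h' | h'
            · exact absurd h' hΔ
            · exact h'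
          exact pow_eq_zero_iff (by norm_num) |>.mp h4
        have hv₁u : v₁ = -(m * u) := by linarith
        have ht₁u : t₁ = -(b * u) := by linarith
        have hm0 : m = 0 := by
          by_contra hmne
          have e2 : ∀ τ ∈ Set.Ioo (0:ℝ) 1,
              -(m ^ 2) * (τ - u) ^ 2
                = (τ - u) * (A * (s₁ + b * u - b * τ) - b * (A * τ + B))
                  - 2 * (A * τ + B) * (s₁ + b * u - b * τ) := by
            intro τ hτ
            have hP := P1 τ hτ
            rw [ha0, hv₁u, ht₁u] at hP
            have hwne : τ - u ≠ 0 := by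
              intro h0
              have hT := htp τ ⟨hτ.1.le, hτ.2.le⟩
              have hTw : t₁ + b * τ = b * (τ - u) := by rw [ht₁u]; ring
              rw [hTw, h0, mul_zero] at hT
              exact lt_irrefl 0 hT
            have hfac : s₁ * b * m ^ 2 * (τ - u) ^ 2 ≠ 0 :=
              mul_ne_zero (mul_ne_zero (mul_ne_zero hs₁.ne' hb0) (pow_ne_zero 2 hmne))
                (pow_ne_zero 2 hwne)
            apply mul_left_cancel₀ hfac
            linear_combination hP
          have h14 := e2 (1/4) (by norm_num)
          have h12 := e2 (1/2) (by norm_num)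
          have h34 := e2 (3/4) (by norm_num)
          have hm2 : m ^ 2 = 0 := by linear_combination (-8) * (h34 - 2 * h12 + h14)
          exact hmne (pow_eq_zero_iff two_ne_zero |>.mp hm2)
        constructor
        · rw [hv₁u, hm0]; ring
        · have h2 : v₂ = v₁ + m := by rw [hm]; ring
          rw [h2, hv₁u, hm0]; ring
      · by_cases hb0 : b = 0
        · -- t is constant, s is not
          set u := -s₁ / a with hudef
          have hu : a * u = -s₁ := by rw [hudef]; field_simp
          have hSu : s₁ + a * u = 0 := by linear_combination hu
          have hroot : v₁ + m * u = 0 := by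
            have h := P1' u
            rw [hSu, zero_mul, zero_mul] at h
            have h4 : (v₁ + m * u) ^ 4 = 0 := by
              rcases mul_eq_zero.mp h with h' | h'
              · exact absurd h' hΔ
              · exact h'
            exact pow_eq_zero_iff (by norm_num) |>.mp h4
          have hv₁u : v₁ = -(m * u) := by linarith
          have hs₁u : s₁ = -(a * u) := by linarith
          have hm0 : m = 0 := by
            by_contra hmne
            have e2 : ∀ τ ∈ Set.Ioo (0:ℝ) 1,
                m ^ 2 * (τ - u) ^ 2
                  = (τ - u) * (A * (-(a * u) + a * τ - t₁) + a * (A * τ + B))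
                    - 2 * (A * τ + B) * (-(a * u) + a * τ - t₁) := by
              intro τ hτ
              have hP := P1 τ hτ
              rw [hb0, hv₁u, hs₁u] at hP
              have hwne : τ - u ≠ 0 := by
                intro h0
                have hS := hsp τ ⟨hτ.1.le, hτ.2.le⟩
                have hSw : s₁ + a * τ = a * (τ - u) := by rw [hs₁u]; ring
                rw [hSw, h0, mul_zero] at hS
                exact lt_irrefl 0 hS
              have hfac : a * t₁ * m ^ 2 * (τ - u) ^ 2 ≠ 0 :=
                mul_ne_zero (mul_ne_zero (mul_ne_zero ha0 ht₁.ne') (pow_ne_zero 2 hmne))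
                  (pow_ne_zero 2 hwne)
              apply mul_left_cancel₀ hfac
              linear_combination hP
            have h14 := e2 (1/4) (by norm_num)
            have h12 := e2 (1/2) (by norm_num)
            have h34 := e2 (3/4) (by norm_num)
            have hm2 : m ^ 2 = 0 := by linear_combination 8 * (h34 - 2 * h12 + h14)
            exact hmne (pow_eq_zero_iff two_ne_zero |>.mp hm2)
          constructor
          · rw [hv₁u, hm0]; ring
          · have h2 : v₂ = v₁ + m := by rw [hm]; ring
            rw [h2, hv₁u, hm0]; ring
        · -- both a and b nonzero : p has two distinct roots
          have hus : a * (-s₁ / a) = -s₁ := by field_simp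
          have hut : b * (-t₁ / b) = -t₁ := by field_simp
          have hSu : s₁ + a * (-s₁ / a) = 0 := by linear_combination hus
          have hTu : t₁ + b * (-t₁ / b) = 0 := by linear_combination hut
          have hroots : v₁ + m * (-s₁ / a) = 0 := by
            have h := P1' (-s₁ / a)
            rw [hSu, zero_mul, zero_mul] at h
            have h4 : (v₁ + m * (-s₁ / a)) ^ 4 = 0 := by
              rcases mul_eq_zero.mp h with h' | h'
              · exact absurd h' hΔ
              · exact h'
            exact pow_eq_zero_iff (by norm_num) |>.mp h4
          have hroott : v₁ + m * (-t₁ / b) = 0 := by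
            have h := P1' (-t₁ / b)
            rw [hTu, mul_zero, zero_mul] at h
            have h4 : (v₁ + m * (-t₁ / b)) ^ 4 = 0 := by
              rcases mul_eq_zero.mp h with h' | h'
              · exact absurd h' hΔ
              · exact h'
            exact pow_eq_zero_iff (by norm_num) |>.mp h4
          have hne' : (-s₁ / a) ≠ (-t₁ / b) := by
            intro h
            apply hΔ
            linear_combination (-b) * hus + a * hut + (a * b) * h
          have hmu : m * ((-s₁ / a) - (-t₁ / b)) = 0 := by
            linear_combination hroots - hroott
          have hm0 : m = 0 := by
            rcases mul_eq_zero.mp hmu with h | h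
            · exact h
            · exact absurd (sub_eq_zero.mp h) hne'
          have hv₁0 : v₁ = 0 := by
            rw [hm0, zero_mul, add_zero] at hroots
            exact hroots
          constructor
          · exact hv₁0
          · rw [hm] at hm0
            linarith
  · rintro (⟨h1, h2⟩ | ⟨κ, hκ, hκ1, heq⟩)
    · refine ⟨0, 0, fun τ hτ => ?_⟩
      have hv : (1 - τ) * v₁ + τ * v₂ = 0 := by rw [h1, h2]; ring
      rw [alphaR, hv]
      norm_num
    · obtain ⟨hv, hs, ht⟩ : v₂ = κ * v₁ ∧ s₂ = κ * s₁ ∧ t₂ = κ * t₁ := by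
        simpa [Prod.ext_iff] using heq
      have hθ : 0 < logMean s₁ t₁ := logMean_pos hs₁ ht₁
      refine ⟨(κ - 1) * (v₁ ^ 2 / logMean s₁ t₁), v₁ ^ 2 / logMean s₁ t₁, fun τ hτ => ?_⟩
      have hℓ : 0 < 1 + (κ - 1) * τ := by
        have := convex_pos one_pos hκ hτ.1 hτ.2; linarith
      have hS : (1 - τ) * s₁ + τ * s₂ = (1 + (κ - 1) * τ) * s₁ := by rw [hs]; ring
      have hT : (1 - τ) * t₁ + τ * t₂ = (1 + (κ - 1) * τ) * t₁ := by rw [ht]; ring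
      have hV : (1 - τ) * v₁ + τ * v₂ = (1 + (κ - 1) * τ) * v₁ := by rw [hv]; ring
      rw [alphaR, hS, hT, hV, logMean_smul hℓ hs₁ ht₁]
      field_simp
      ring
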